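/- Let f ∈ ℂ[z] be a polynomial of degree d ≥ 2. Then the sequence of functions g_n(z) := d^{-n} log max{1, |f^{∘n}(z)|} converges uniformly on ℂ to a continuous function g_f : ℂ → ℝ, and moreover there is a constant C > 0 such that sup_{z ∈ ℂ} |g_f(z) − d^{-n} log max{1, |f^{∘n}(z)|}| ≤ C·d^{-n} for every n ≥ 1. -/

import Mathlib

open Filter Topology

lemma green_key (f : Polynomial ℂ) (d : ℕ) (hd : 2 ≤ d) (hdeg : f.natDegree = d) :
    ∃ C > 0, ∀ w : ℂ,
      |Real.log (max 1 (‖f.eval w‖)) -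
        (d : ℝ) * Real.log (max 1 (‖w‖))| ≤ C := by
  obtain ⟨e, rfl⟩ : ∃ e, d = e + 1 := ⟨d - 1, by omega⟩
  set a := f.leadingCoeff with ha_def
  have hf0 : f ≠ 0 := fun h => by simp [h] at hdeg
  have ha : 0 < ‖a‖ := by
    simpa [ha_def] using (Polynomial.leadingCoeff_ne_zero.mpr hf0)
  set M : ℝ := ∑ i ∈ Finset.range (e + 2), ‖f.coeff i‖ with hM_def
  have hMa : ‖a‖ ≤ M := by
    have : ‖f.coeff (e + 1)‖ ≤ M := by
      apply Finset.single_le_sum (f := fun i => ‖f.coeff i‖)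
      · intro i _; positivity
      · simp
    simpa [ha_def, Polynomial.leadingCoeff, hdeg] using this
  have hM : 0 < M := lt_of_lt_of_le ha hMa
  -- upper bound
  have upper : ∀ w : ℂ, ‖f.eval w‖ ≤ M * max 1 (‖w‖) ^ (e + 1) := by
    intro w
    have h1 : (1:ℝ) ≤ max 1 (‖w‖) := le_max_left _ _
    have heval : f.eval w = ∑ i ∈ Finset.range (e + 2), f.coeff i * w ^ i := by
      rw [Polynomial.eval_eq_sum_range]; rw [hdeg]
    rw [heval]
    calc ‖∑ i ∈ Finset.range (e + 2), f.coeff i * w ^ i‖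
        ≤ ∑ i ∈ Finset.range (e + 2), ‖f.coeff i * w ^ i‖ :=
          norm_sum_le _ _
      _ ≤ ∑ i ∈ Finset.range (e + 2), ‖f.coeff i‖ * max 1 (‖w‖) ^ (e+1) := by
          apply Finset.sum_le_sum
          intro i hi
          rw [norm_mul, norm_pow]
          apply mul_le_mul_of_nonneg_left _ (by positivity)
          calc ‖w‖ ^ i ≤ max 1 (‖w‖) ^ i :=
                pow_le_pow_left₀ (by positivity) (le_max_right _ _) i
            _ ≤ max 1 (‖w‖) ^ (e+1) :=
                pow_le_pow_right₀ h1 (by simpa using Nat.lt_succ_iff.mp (Finset.mem_range.mp hi))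
      _ = M * max 1 (‖w‖) ^ (e+1) := by rw [hM_def, Finset.sum_mul]
  set R : ℝ := max 1 ((2 * M + 2) / ‖a‖) with hR_def
  have hR1 : (1:ℝ) ≤ R := le_max_left _ _
  -- lower bound
  have lower : ∀ w : ℂ, R ≤ ‖w‖ →
      1 ≤ ‖a‖ / 2 * ‖w‖ ^ (e + 1) ∧
      ‖a‖ / 2 * ‖w‖ ^ (e + 1) ≤ ‖f.eval w‖ := by
    intro w hw
    have hw1 : (1:ℝ) ≤ ‖w‖ := le_trans hR1 hw
    have hw2 : 2 * M + 2 ≤ ‖a‖ * ‖w‖ := by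
      have : (2 * M + 2) / ‖a‖ ≤ ‖w‖ :=
        le_trans (le_max_right _ _) hw
      calc 2 * M + 2 = ‖a‖ * ((2 * M + 2) / ‖a‖) := by
            field_simp
        _ ≤ ‖a‖ * ‖w‖ := by
            exact mul_le_mul_of_nonneg_left this ha.le
    have hwpow : ‖w‖ ≤ ‖w‖ ^ (e + 1) := by
      calc ‖w‖ = ‖w‖ ^ 1 := (pow_one _).symm
        _ ≤ ‖w‖ ^ (e + 1) := pow_le_pow_right₀ hw1 (by omega)
    constructor
    · have h2 : (1:ℝ) ≤ ‖a‖ / 2 * ‖w‖ := by nlinarith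
      nlinarith [pow_nonneg (norm_nonneg w) (e+1), ha]
    · have heval : f.eval w = (∑ i ∈ Finset.range (e + 1), f.coeff i * w ^ i)
          + a * w ^ (e + 1) := by
        rw [Polynomial.eval_eq_sum_range, hdeg, Finset.sum_range_succ]
        congr 2
        simp [ha_def, Polynomial.leadingCoeff, hdeg]
      set g : ℂ := ∑ i ∈ Finset.range (e + 1), f.coeff i * w ^ i with hg_def
      have hgb : ‖g‖ ≤ M * ‖w‖ ^ e := by
        calc ‖g‖ ≤ ∑ i ∈ Finset.range (e + 1), ‖f.coeff i * w ^ i‖ :=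
              norm_sum_le _ _
          _ ≤ ∑ i ∈ Finset.range (e + 1), ‖f.coeff i‖ * ‖w‖ ^ e := by
              apply Finset.sum_le_sum
              intro i hi
              rw [norm_mul, norm_pow]
              apply mul_le_mul_of_nonneg_left _ (by positivity)
              exact pow_le_pow_right₀ hw1 (Nat.lt_succ_iff.mp (Finset.mem_range.mp hi))
          _ = (∑ i ∈ Finset.range (e + 1), ‖f.coeff i‖) * ‖w‖ ^ e := by
              rw [Finset.sum_mul]
          _ ≤ M * ‖w‖ ^ e := by
              apply mul_le_mul_of_nonneg_right _ (by positivity)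
              rw [hM_def]
              exact Finset.sum_le_sum_of_subset_of_nonneg
                (Finset.range_subset_range.mpr (by omega)) (fun i _ _ => by positivity)
      have htri : ‖a‖ * ‖w‖ ^ (e + 1) - ‖g‖
          ≤ ‖f.eval w‖ := by
        rw [heval]
        have := norm_add_le g (a * w ^ (e + 1))
        have h2 : ‖a * w ^ (e+1)‖ = ‖a‖ * ‖w‖ ^ (e+1) := by
          rw [norm_mul, norm_pow]
        have h3 : ‖a * w ^ (e+1)‖
            ≤ ‖g + a * w ^ (e+1)‖ + ‖g‖ := by
          calc ‖a * w ^ (e+1)‖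
              = ‖(g + a * w ^ (e+1)) + (-g)‖ := by congr 1; ring
            _ ≤ ‖g + a * w ^ (e+1)‖ + ‖-g‖ :=
                norm_add_le _ _
            _ = ‖g + a * w ^ (e+1)‖ + ‖g‖ := by rw [norm_neg]
        linarith
      have hpe : (0:ℝ) ≤ ‖w‖ ^ e := by positivity
      have hps : ‖w‖ ^ (e + 1) = ‖w‖ ^ e * ‖w‖ := pow_succ _ _
      nlinarith
  -- assemble the constant
  refine ⟨|Real.log (‖a‖ / 2)| + |Real.log M| + (e + 1 : ℝ) * Real.log R + 1,
    by nlinarith [Real.log_nonneg hR1, abs_nonneg (Real.log (‖a‖ / 2)),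
      abs_nonneg (Real.log M), (by positivity : (0:ℝ) ≤ (e+1:ℝ))], ?_⟩
  intro w
  have hlogR : 0 ≤ Real.log R := Real.log_nonneg hR1
  have hcast : ((e + 1 : ℕ) : ℝ) = (e + 1 : ℝ) := by push_cast; ring
  rw [hcast]
  rcases le_or_gt R (‖w‖) with hw | hw
  · -- outer region
    have hw1 : (1:ℝ) ≤ ‖w‖ := le_trans hR1 hw
    have hw0 : (0:ℝ) < ‖w‖ := lt_of_lt_of_le one_pos hw1
    obtain ⟨h1f, h2f⟩ := lower w hw
    have hfe1 : (1:ℝ) ≤ ‖f.eval w‖ := le_trans h1f h2f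
    rw [max_eq_right hw1, max_eq_right hfe1]
    have hub : ‖f.eval w‖ ≤ M * ‖w‖ ^ (e + 1) := by
      have := upper w; rwa [max_eq_right hw1] at this
    have hlog1 : Real.log (‖a‖ / 2 * ‖w‖ ^ (e + 1))
        ≤ Real.log (‖f.eval w‖) :=
      Real.log_le_log (by positivity) h2f
    have hlog2 : Real.log (‖f.eval w‖)
        ≤ Real.log (M * ‖w‖ ^ (e + 1)) :=
      Real.log_le_log (lt_of_lt_of_le one_pos hfe1) hub
    rw [Real.log_mul (div_pos ha two_pos).ne' (pow_ne_zero _ hw0.ne'),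
      Real.log_pow] at hlog1
    rw [Real.log_mul hM.ne' (pow_ne_zero _ hw0.ne'), Real.log_pow] at hlog2
    rw [hcast] at hlog1 hlog2
    rw [abs_le]
    constructor
    · nlinarith [neg_abs_le (Real.log (‖a‖ / 2)), abs_nonneg (Real.log M)]
    · nlinarith [le_abs_self (Real.log M), abs_nonneg (Real.log (‖a‖ / 2))]
  · -- inner region
    have hwR : ‖w‖ ≤ R := hw.le
    have hphiw0 : 0 ≤ Real.log (max 1 (‖w‖)) :=
      Real.log_nonneg (le_max_left _ _)
    have hphiwR : Real.log (max 1 (‖w‖)) ≤ Real.log R :=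
      Real.log_le_log (lt_of_lt_of_le one_pos (le_max_left _ _)) (max_le hR1 hwR)
    have hphif0 : 0 ≤ Real.log (max 1 (‖f.eval w‖)) :=
      Real.log_nonneg (le_max_left _ _)
    have hub : ‖f.eval w‖ ≤ M * R ^ (e + 1) := by
      calc ‖f.eval w‖ ≤ M * max 1 (‖w‖) ^ (e + 1) := upper w
        _ ≤ M * R ^ (e + 1) := by
            apply mul_le_mul_of_nonneg_left _ hM.le
            exact pow_le_pow_left₀ (by positivity) (max_le hR1 hwR) _
    have hphifub : Real.log (max 1 (‖f.eval w‖))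
        ≤ |Real.log M| + (e + 1 : ℝ) * Real.log R := by
      rcases le_total (‖f.eval w‖) 1 with h | h
      · rw [max_eq_left h]
        simp only [Real.log_one]
        positivity
      · rw [max_eq_right h]
        have h1 : Real.log (‖f.eval w‖) ≤ Real.log (M * R ^ (e + 1)) :=
          Real.log_le_log (lt_of_lt_of_le one_pos h) hub
        rw [Real.log_mul hM.ne' (pow_ne_zero _ (lt_of_lt_of_le one_pos hR1).ne'),
          Real.log_pow, hcast] at h1
        linarith [le_abs_self (Real.log M)]
    have hmul : (e + 1 : ℝ) * Real.log (max 1 (‖w‖))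
        ≤ (e + 1 : ℝ) * Real.log R :=
      mul_le_mul_of_nonneg_left hphiwR (by positivity)
    have hmul0 : (0:ℝ) ≤ (e + 1 : ℝ) * Real.log (max 1 (‖w‖)) :=
      mul_nonneg (by positivity) hphiw0
    rw [abs_le]
    constructor
    · linarith [abs_nonneg (Real.log M), abs_nonneg (Real.log (‖a‖ / 2))]
    · linarith [abs_nonneg (Real.log (‖a‖ / 2))]


/-- For a polynomial `f` of degree `d ≥ 2`, the functions
`z ↦ d^{-n} log max{1, |f^{∘n}(z)|}` converge uniformly on `ℂ` to a continuous
function `g_f` (the Green function of the filled-in Julia set with pole at `∞`),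
with uniform error at most `C · d^{-n}`. -/
theorem green_function_uniform_limit
    (f : Polynomial ℂ) (d : ℕ) (hd : 2 ≤ d) (hdeg : f.natDegree = d) :
    ∃ g : ℂ → ℝ, Continuous g ∧
      TendstoUniformly
        (fun (n : ℕ) (z : ℂ) =>
          ((d : ℝ) ^ n)⁻¹ * Real.log (max 1 (‖(fun w => f.eval w)^[n] z‖)))
        g atTop ∧
      ∃ C > 0, ∀ n : ℕ, 1 ≤ n → ∀ z : ℂ,
        |g z -
            ((d : ℝ) ^ n)⁻¹ * Real.log (max 1 (‖(fun w => f.eval w)^[n] z‖))| ≤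
          C * ((d : ℝ) ^ n)⁻¹ := by
  obtain ⟨C, hC, hkey⟩ := green_key f d hd hdeg
  have hd1 : (1:ℝ) < (d:ℝ) := by exact_mod_cast lt_of_lt_of_le one_lt_two hd
  have hdpos : (0:ℝ) < (d:ℝ) := lt_trans one_pos hd1
  set F : ℕ → ℂ → ℝ := fun n z =>
    ((d : ℝ) ^ n)⁻¹ * Real.log (max 1 (‖(fun w => f.eval w)^[n] z‖))
    with hF_def
  have step : ∀ n (z : ℂ), |F (n+1) z - F n z| ≤ C * ((d:ℝ)^(n+1))⁻¹ := by
    intro n z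
    set w := (fun w => f.eval w)^[n] z with hw_def
    have hit : (fun w => f.eval w)^[n+1] z = f.eval w := by
      rw [Function.iterate_succ_apply']
    have hF : F (n+1) z - F n z = ((d:ℝ)^(n+1))⁻¹ *
        (Real.log (max 1 (‖f.eval w‖))
          - (d:ℝ) * Real.log (max 1 (‖w‖))) := by
      simp only [hF_def, hit]
      have hne : ((d:ℝ)^n) ≠ 0 := by positivity
      have hne2 : ((d:ℝ)^(n+1)) ≠ 0 := by positivity
      field_simp
      ring
    rw [hF, abs_mul, abs_of_nonneg (by positivity : (0:ℝ) ≤ ((d:ℝ)^(n+1))⁻¹), mul_comm]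
    exact mul_le_mul_of_nonneg_right (hkey w) (by positivity)
  have bound : ∀ n m (z : ℂ),
      |F (n+m) z - F n z| ≤ C * ((d:ℝ)^n)⁻¹ - C * ((d:ℝ)^(n+m))⁻¹ := by
    intro n m z
    induction m with
    | zero => simp
    | succ m ih =>
      have h1 := step (n+m) z
      have h2 : 2 * ((d:ℝ)^(n+m+1))⁻¹ ≤ ((d:ℝ)^(n+m))⁻¹ := by
        rw [pow_succ, mul_inv]
        have hinv : (d:ℝ)⁻¹ ≤ 2⁻¹ := by
          apply inv_anti₀ (by norm_num)
          exact_mod_cast hd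
        have hp : (0:ℝ) < ((d:ℝ)^(n+m))⁻¹ := by positivity
        nlinarith
      have key2 : C * ((d:ℝ)^(n+m+1))⁻¹ + (C * ((d:ℝ)^n)⁻¹ - C * ((d:ℝ)^(n+m))⁻¹)
          ≤ C * ((d:ℝ)^n)⁻¹ - C * ((d:ℝ)^(n+m+1))⁻¹ := by nlinarith
      have htr : |F (n+(m+1)) z - F n z|
          ≤ |F (n+m+1) z - F (n+m) z| + |F (n+m) z - F n z| := by
        have : n + (m+1) = (n+m)+1 := by omega
        rw [this]
        exact abs_sub_le _ _ _
      have : n + (m+1) = (n+m)+1 := by omega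
      rw [this]
      calc |F (n+m+1) z - F n z|
          ≤ |F (n+m+1) z - F (n+m) z| + |F (n+m) z - F n z| := abs_sub_le _ _ _
        _ ≤ C * ((d:ℝ)^(n+m+1))⁻¹ + (C * ((d:ℝ)^n)⁻¹ - C * ((d:ℝ)^(n+m))⁻¹) := by
            exact add_le_add h1 ih
        _ ≤ C * ((d:ℝ)^n)⁻¹ - C * ((d:ℝ)^(n+m+1))⁻¹ := key2
  have bound2 : ∀ n m (z : ℂ), |F (n+m) z - F n z| ≤ C * ((d:ℝ)^n)⁻¹ := by
    intro n m z
    have := bound n m z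
    have h0 : (0:ℝ) ≤ C * ((d:ℝ)^(n+m))⁻¹ := by positivity
    linarith
  have hcauchy : ∀ z : ℂ, CauchySeq (fun n => F n z) := by
    intro z
    apply cauchySeq_of_le_geometric (d:ℝ)⁻¹ C (by
      rw [inv_lt_one_iff₀]; right; exact hd1)
    intro n
    rw [Real.dist_eq]
    have h1 : |F n z - F (n+1) z| = |F (n+1) z - F n z| := abs_sub_comm _ _
    rw [h1]
    calc |F (n+1) z - F n z| ≤ C * ((d:ℝ)^(n+1))⁻¹ := step n z
      _ ≤ C * ((d:ℝ)⁻¹)^n := by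
          apply mul_le_mul_of_nonneg_left _ hC.le
          rw [← inv_pow]
          apply pow_le_pow_of_le_one (by positivity) (by
            rw [inv_le_one_iff₀]; right; exact hd1.le) (by omega)
  have hexists : ∀ z : ℂ, ∃ L : ℝ, Tendsto (fun n => F n z) atTop (𝓝 L) :=
    fun z => cauchySeq_tendsto_of_complete (hcauchy z)
  choose g hg using hexists
  have errbound : ∀ n (z : ℂ), |g z - F n z| ≤ C * ((d:ℝ)^n)⁻¹ := by
    intro n z
    have ht : Tendsto (fun m => |F (m+n) z - F n z|) atTop (𝓝 |g z - F n z|) := by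
      have h1 : Tendsto (fun m => F (m+n) z) atTop (𝓝 (g z)) :=
        (hg z).comp (tendsto_add_atTop_nat n)
      exact (h1.sub tendsto_const_nhds).abs
    apply le_of_tendsto ht
    filter_upwards with m
    rw [add_comm m n]
    exact bound2 n m z
  have hto : Tendsto (fun n => C * ((d:ℝ)^n)⁻¹) atTop (𝓝 0) := by
    have h1 : Tendsto (fun n : ℕ => ((d:ℝ)⁻¹)^n) atTop (𝓝 0) :=
      tendsto_pow_atTop_nhds_zero_of_lt_one (by positivity)
        (by rw [inv_lt_one_iff₀]; right; exact hd1)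
    have := h1.const_mul C
    simpa [inv_pow] using this
  have hTU : TendstoUniformly F g atTop := by
    rw [Metric.tendstoUniformly_iff]
    intro ε hε
    filter_upwards [hto.eventually (gt_mem_nhds hε)] with n hn z
    rw [Real.dist_eq]
    exact lt_of_le_of_lt (errbound n z) hn
  have hFc : ∀ n, Continuous (F n) := by
    intro n
    apply Continuous.mul continuous_const
    apply Continuous.log
    · exact continuous_const.max (continuous_norm.comp
        ((f.continuous).iterate n))
    · intro z
      exact ne_of_gt (lt_of_lt_of_le one_pos (le_max_left _ _))
  exact ⟨g, hTU.continuous (Frequently.of_forall hFc), hTU,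
    C, hC, fun n _ z => errbound n z⟩
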